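/- Let Π_A be an observable on ℂ^D with Tr(Π_A) > 0, set ρ_A := Π_A / Tr(Π_A) and ⟨Π_A⟩ := Tr(Π_A)/D. Let w₊ be a completely positive weight, W ∈ (0,1), and ΔE_W > 0 with w̃₊(δE) > W for all δE with |δE| < ΔE_W. Suppose |∫_ℝ w₊(t) · Tr(ρ_A(t) Π_A) dt − ⟨Π_A⟩| < ε_A for some ε_A > 0. Then for every ΔE with 0 < ΔE ≤ ΔE_W one has (1/D) · Σ_{n,m ∈ Fin D with |E n − E m| < ΔE} |⟨e n, (Π_A − ⟨Π_A⟩·I)(e m)⟩|² < (Tr(Π_A)/(W·D)) · ε_A; that is, Π_A satisfies energy-band thermalization in the full space with bandwidth ΔE and accuracy √(Tr(Π_A)·ε_A/(W·D)). -/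

import Mathlib

open MeasureTheory Filter
open scoped ComplexOrder

namespace QET

variable {D : ℕ}

/-- `exp(-itH)` for the Hamiltonian `H = Σ_n (E n) • P_n`, where `P_n` is the orthogonal
projection onto the `n`-th vector of the fixed orthonormal eigenbasis `e`.  All operators are
written as matrices in this eigenbasis, so `H` is diagonal and
`exp(-itH) = diag (exp (-i t E n))`. -/
noncomputable def U (E : Fin D → ℝ) (t : ℝ) : Matrix (Fin D) (Fin D) ℂ :=
  Matrix.diagonal fun n => Complex.exp (-(Complex.I) * t * (E n))

/-- Time evolution `X(t) = exp(-itH) · X · exp(itH)`. -/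
noncomputable def evolve (E : Fin D → ℝ) (t : ℝ) (X : Matrix (Fin D) (Fin D) ℂ) :
    Matrix (Fin D) (Fin D) ℂ :=
  U E t * X * U E (-t)

/-- A state: a positive semidefinite operator with unit trace. -/
def IsState (ρ : Matrix (Fin D) (Fin D) ℂ) : Prop :=
  ρ.PosSemidef ∧ ρ.trace = 1

/-- An observable: an orthogonal projection (Hermitian idempotent). -/
def IsObservable (P : Matrix (Fin D) (Fin D) ℂ) : Prop :=
  P.IsHermitian ∧ P * P = P

/-- Orthogonal projection `Π_S` onto the energy shell spanned by `{e n : n ∈ S}`. -/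
noncomputable def shellProj (S : Finset (Fin D)) : Matrix (Fin D) (Fin D) ℂ :=
  Matrix.diagonal fun n => if n ∈ S then 1 else 0

/-- A state is supported on the shell of `S`: `Π_S ρ Π_S = ρ`. -/
def SupportedOn (S : Finset (Fin D)) (ρ : Matrix (Fin D) (Fin D) ℂ) : Prop :=
  shellProj S * ρ * shellProj S = ρ

/-- Thermal value `⟨P⟩_S = Tr(P Π_S)/d` (a real number: trace of Hermitian products below). -/
noncomputable def thermVal (S : Finset (Fin D)) (P : Matrix (Fin D) (Fin D) ℂ) : ℝ :=
  (P * shellProj S).trace.re / S.card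

/-- Fourier transform `w̃(E) = ∫ w(t) exp(-iEt) dt` of a weight function. -/
noncomputable def fourier (w : ℝ → ℝ) (En : ℝ) : ℂ :=
  ∫ t : ℝ, (w t : ℂ) * Complex.exp (-(Complex.I) * En * t)

/-- A weight function: integrable, nonnegative, normalized to `∫ w = 1`. -/
structure IsWeight (w : ℝ → ℝ) : Prop where
  integrable : Integrable w
  nonneg : ∀ t, 0 ≤ w t
  normalized : (∫ t : ℝ, w t) = 1

/-- A completely positive weight: a weight function whose Fourier transform is a
nonnegative real number everywhere. -/
structure IsCPWeight (w : ℝ → ℝ) extends IsWeight w : Prop where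
  fourier_im : ∀ En : ℝ, (fourier w En).im = 0
  fourier_nonneg : ∀ En : ℝ, 0 ≤ (fourier w En).re

/-- The matrix element `⟨e n, (P - ⟨P⟩_S · 1) e m⟩ = ⟨e n, P e m⟩ - ⟨P⟩_S δ_{nm}`. -/
noncomputable def devEl (S : Finset (Fin D)) (P : Matrix (Fin D) (Fin D) ℂ)
    (n m : Fin D) : ℂ :=
  P n m - if n = m then (thermVal S P : ℂ) else 0

/-- Band variance `Σ_{n,m ∈ S, |E n - E m| < ΔE} |⟨e n, P e m⟩ - ⟨P⟩_S δ_{nm}|²`. -/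
noncomputable def bandVar (S : Finset (Fin D)) (E : Fin D → ℝ) (ΔE : ℝ)
    (P : Matrix (Fin D) (Fin D) ℂ) : ℝ :=
  ∑ n ∈ S, ∑ m ∈ S,
    if |E n - E m| < ΔE then ‖devEl S P n m‖ ^ 2 else 0

/-- Energy-band thermalization in the shell `S` with bandwidth `ΔE` and accuracy `ε`. -/
def EnergyBandTherm (S : Finset (Fin D)) (E : Fin D → ℝ) (ΔE ε : ℝ)
    (P : Matrix (Fin D) (Fin D) ℂ) : Prop :=
  (1 / (S.card : ℝ)) * bandVar S E ΔE P < ε ^ 2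

/-- Expectation value `⟨v, P v⟩` of an operator in a vector. -/
noncomputable def expVal (P : Matrix (Fin D) (Fin D) ℂ) (v : Fin D → ℂ) : ℂ :=
  dotProduct (star v) (P.mulVec v)


section Aux

lemma integral_swap_aux (w : ℝ → ℝ) (hw : MeasureTheory.Integrable w) (D : ℕ)
    (δ : Fin D → Fin D → ℝ) (a : Fin D → Fin D → ℂ) (c : ℂ) :
    (∫ t : ℝ, (w t : ℂ) * (c * ∑ n, ∑ m, Complex.exp (-Complex.I * δ n m * t) * a n m))
      = c * ∑ n, ∑ m, (∫ t : ℝ, (w t : ℂ) * Complex.exp (-Complex.I * δ n m * t)) * a n m := by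
  have hint : ∀ (d : ℝ), MeasureTheory.Integrable
      (fun t : ℝ => (w t : ℂ) * Complex.exp (-Complex.I * d * t)) := by
    intro d
    apply MeasureTheory.Integrable.mono' hw.abs
    · exact (Complex.measurable_ofReal.comp_aemeasurable hw.aemeasurable).aestronglyMeasurable.mul
        ((Complex.continuous_exp.comp (by continuity)).aestronglyMeasurable)
    · exact Filter.Eventually.of_forall fun t => by simp [Complex.norm_exp]
  have h1 : (fun t : ℝ => (w t : ℂ) * (c * ∑ n, ∑ m, Complex.exp (-Complex.I * δ n m * t) * a n m))
      = fun t : ℝ => c * ∑ n, ∑ m, ((w t : ℂ) * Complex.exp (-Complex.I * δ n m * t)) * a n m := by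
    funext t
    simp only [Finset.mul_sum]
    exact Finset.sum_congr rfl fun n _ => Finset.sum_congr rfl fun m _ => by ring
  rw [h1, MeasureTheory.integral_const_mul]
  congr 1
  rw [MeasureTheory.integral_finset_sum _ fun n _ =>
    MeasureTheory.integrable_finset_sum _ fun m _ => (hint _).mul_const _]
  refine Finset.sum_congr rfl fun n _ => ?_
  rw [MeasureTheory.integral_finset_sum _ fun m _ => (hint _).mul_const _]
  exact Finset.sum_congr rfl fun m _ => MeasureTheory.integral_mul_const _ _

end Aux

/-- **Autocorrelator thermalization o.a. implies global energy-band thermalization.**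
Let `Π_A` be an observable with `Tr Π_A > 0`, `ρ_A := Π_A / Tr Π_A`, `⟨Π_A⟩ := Tr Π_A / D`.
Let `w₊` be a completely positive weight with `w̃₊(δE) > W` for all `|δE| < ΔE_W`
(`W ∈ (0,1)`, `ΔE_W > 0`), and suppose
`|∫ w₊(t) Tr(ρ_A(t) Π_A) dt - ⟨Π_A⟩| < ε_A`.  Then for every `0 < ΔE ≤ ΔE_W`,
`(1/D) Σ_{|E n - E m| < ΔE} |⟨e n, (Π_A - ⟨Π_A⟩ I) e m⟩|² < (Tr Π_A /(W D)) ε_A`. -/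
theorem autocorrelator_thermalization_implies_global_energy_band
    {D : ℕ} (hD : 0 < D) (E : Fin D → ℝ)
    (PiA : Matrix (Fin D) (Fin D) ℂ) (hPiA : IsObservable PiA)
    (htr : 0 < PiA.trace.re)
    (w : ℝ → ℝ) (hw : IsCPWeight w)
    (W ΔEW : ℝ) (hW0 : 0 < W) (hW1 : W < 1) (hΔEW : 0 < ΔEW)
    (hWband : ∀ δE : ℝ, |δE| < ΔEW → W < (fourier w δE).re)
    (εA : ℝ) (hεA : 0 < εA)
    (hauto : ‖
        ((∫ t : ℝ, (w t : ℂ) *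
            (evolve E t ((PiA.trace.re : ℂ)⁻¹ • PiA) * PiA).trace) -
          ((PiA.trace.re / D : ℝ) : ℂ))‖ < εA) :
    ∀ ΔE : ℝ, 0 < ΔE → ΔE ≤ ΔEW →
      (1 / (D : ℝ)) * (∑ n : Fin D, ∑ m : Fin D,
          if |E n - E m| < ΔE then
            ‖(PiA n m - if n = m then ((PiA.trace.re / D : ℝ) : ℂ) else 0)‖ ^ 2
          else 0)
        < (PiA.trace.re / (W * D)) * εA := by
  intro ΔE hΔE0 hΔEW
  classical
  set c : ℝ := PiA.trace.re with hc
  have hD' : (0:ℝ) < D := by exact_mod_cast hD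
  have hDne : (D:ℝ) ≠ 0 := ne_of_gt hD'
  have hcne : (c:ℂ) ≠ 0 := by
    exact_mod_cast Complex.ofReal_ne_zero.2 (ne_of_gt htr)
  -- Hermiticity: PiA m n = star (PiA n m)
  have hherm : ∀ n m, PiA n m * PiA m n = ((Complex.normSq (PiA n m) : ℝ) : ℂ) := by
    intro n m
    have h := congrFun (congrFun hPiA.1 m) n
    rw [Matrix.conjTranspose_apply] at h
    rw [← h, Complex.star_def, Complex.mul_conj]
  -- trace of the evolved product
  have htrace : ∀ t : ℝ, (evolve E t ((c:ℂ)⁻¹ • PiA) * PiA).trace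
      = (c:ℂ)⁻¹ * ∑ n, ∑ m, Complex.exp (-Complex.I * ((E n - E m : ℝ) : ℂ) * t)
          * ((Complex.normSq (PiA n m) : ℝ) : ℂ) := by
    intro t
    have hent : ∀ n m, (evolve E t ((c:ℂ)⁻¹ • PiA)) n m
        = Complex.exp (-Complex.I * t * (E n)) * ((c:ℂ)⁻¹ * PiA n m)
          * Complex.exp (-Complex.I * (-t:ℝ) * (E m)) := by
      intro n m
      simp [evolve, U, Matrix.mul_diagonal, Matrix.diagonal_mul]
      ring
    rw [Matrix.trace]
    simp only [Matrix.diag_apply, Matrix.mul_apply, hent, Finset.mul_sum]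
    refine Finset.sum_congr rfl fun n _ => Finset.sum_congr rfl fun m _ => ?_
    rw [show (-Complex.I * ((E n - E m : ℝ) : ℂ) * (t:ℂ))
        = (-Complex.I * (t:ℂ) * (E n : ℝ)) + (-Complex.I * ((-t : ℝ):ℂ) * (E m : ℝ)) by
      push_cast; ring]
    rw [Complex.exp_add, ← hherm]
    ring
  -- the integral evaluates to a Fourier-weighted sum
  have hI : (∫ t : ℝ, (w t : ℂ) * (evolve E t ((c:ℂ)⁻¹ • PiA) * PiA).trace)
      = (c:ℂ)⁻¹ * ∑ n, ∑ m, fourier w (E n - E m) * ((Complex.normSq (PiA n m) : ℝ) : ℂ) := by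
    simp_rw [htrace]
    exact integral_swap_aux w hw.integrable D (fun n m => E n - E m)
      (fun n m => ((Complex.normSq (PiA n m) : ℝ) : ℂ)) _
  -- the Fourier transform is real
  set G : Fin D → Fin D → ℝ := fun n m => (fourier w (E n - E m)).re with hG
  have hfour : ∀ n m, fourier w (E n - E m) = ((G n m : ℝ) : ℂ) := by
    intro n m
    exact Complex.ext (by simp [hG]) (by simp [hG, hw.fourier_im])
  have hfour1 : ∀ n : Fin D, G n n = 1 := by
    intro n
    have h0 : fourier w ((0:ℝ)) = 1 := by
      have : ∀ t : ℝ, (w t : ℂ) * Complex.exp (-Complex.I * ((0:ℝ):ℂ) * t) = ((w t : ℝ) : ℂ) := by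
        intro t; simp
      rw [fourier]
      simp only [this]
      rw [show (∫ t : ℝ, ((w t : ℝ) : ℂ)) = ((∫ t : ℝ, w t : ℝ) : ℂ) from integral_ofReal,
        hw.normalized, Complex.ofReal_one]
    simp only [hG, sub_self, h0, Complex.one_re]
  -- deviation matrix elements
  set r : ℝ := c / D with hr
  set dev : Fin D → Fin D → ℂ := fun n m => PiA n m - if n = m then ((r:ℝ):ℂ) else 0 with hdev
  -- diagonal sum of re
  have hdiag : ∑ n, (PiA n n).re = c := by
    rw [hc, Matrix.trace, ← Complex.re_sum]
    rfl
  -- key algebraic identity over ℝ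
  have hkey : (∑ n, ∑ m, G n m * Complex.normSq (dev n m))
      = (∑ n, ∑ m, G n m * Complex.normSq (PiA n m)) - c^2 / D := by
    have hsplit : ∀ n m, G n m * Complex.normSq (dev n m)
        = G n m * Complex.normSq (PiA n m)
          + (if n = m then (r^2 - 2 * r * (PiA n n).re) else 0) := by
      intro n m
      by_cases h : n = m
      · subst h
        simp only [hdev, if_pos rfl, hfour1]
        simp [Complex.normSq_apply, Complex.sub_re, Complex.sub_im, Complex.ofReal_re,
          Complex.ofReal_im]
        ring
      · simp [hdev, if_neg h]
    simp_rw [hsplit, Finset.sum_add_distrib]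
    congr 1
    have : ∀ n : Fin D, (∑ m, if n = m then (r^2 - 2 * r * (PiA n n).re) else 0)
        = r^2 - 2 * r * (PiA n n).re := by
      intro n; simp
    simp_rw [this, Finset.sum_sub_distrib, Finset.sum_const, Finset.card_univ, Fintype.card_fin,
      nsmul_eq_mul, ← Finset.mul_sum, hdiag]
    rw [hr]
    field_simp
    ring
  -- the complex identity
  have hCident : ((∑ n, ∑ m, G n m * Complex.normSq (dev n m) : ℝ) : ℂ)
      = (c:ℂ) * ((∫ t : ℝ, (w t : ℂ) * (evolve E t ((c:ℂ)⁻¹ • PiA) * PiA).trace)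
          - ((r : ℝ) : ℂ)) := by
    rw [hI, mul_sub, ← mul_assoc, mul_inv_cancel₀ hcne, one_mul]
    simp_rw [hfour]
    rw [hkey]
    push_cast [hr]
    ring
  -- bound on the real sum
  have hRlt : (∑ n, ∑ m, G n m * Complex.normSq (dev n m)) < c * εA := by
    have h1 : (∑ n, ∑ m, G n m * Complex.normSq (dev n m))
        ≤ ‖(((∑ n, ∑ m, G n m * Complex.normSq (dev n m) : ℝ) : ℂ))‖ := by
      rw [Complex.norm_real, Real.norm_eq_abs]; exact le_abs_self _
    refine lt_of_le_of_lt h1 ?_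
    rw [hCident, norm_mul, Complex.norm_real, Real.norm_eq_abs, abs_of_pos htr]
    exact (mul_lt_mul_iff_right₀ htr).2 hauto
  -- band bound
  have hband : W * (∑ n, ∑ m, if |E n - E m| < ΔE then Complex.normSq (dev n m) else 0)
      ≤ ∑ n, ∑ m, G n m * Complex.normSq (dev n m) := by
    rw [Finset.mul_sum]
    refine Finset.sum_le_sum fun n _ => ?_
    rw [Finset.mul_sum]
    refine Finset.sum_le_sum fun m _ => ?_
    by_cases h : |E n - E m| < ΔE
    · rw [if_pos h]
      exact mul_le_mul_of_nonneg_right (le_of_lt (hWband _ (lt_of_lt_of_le h hΔEW)))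
        (Complex.normSq_nonneg _)
    · rw [if_neg h, mul_zero]
      exact mul_nonneg (hw.fourier_nonneg _) (Complex.normSq_nonneg _)
  have hWB : W * (∑ n, ∑ m, if |E n - E m| < ΔE then Complex.normSq (dev n m) else 0)
      < c * εA := lt_of_le_of_lt hband hRlt
  -- convert goal
  have hgoal : (∑ n : Fin D, ∑ m : Fin D,
      if |E n - E m| < ΔE then
        ‖(PiA n m - if n = m then ((c / D : ℝ) : ℂ) else 0)‖ ^ 2
      else 0)
      = ∑ n, ∑ m, if |E n - E m| < ΔE then Complex.normSq (dev n m) else 0 := by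
    refine Finset.sum_congr rfl fun n _ => Finset.sum_congr rfl fun m _ => ?_
    by_cases h : |E n - E m| < ΔE
    · rw [if_pos h, if_pos h, hdev, Complex.sq_norm, hr]
    · rw [if_neg h, if_neg h]
  rw [hgoal]
  have hWD : (0:ℝ) < W * D := mul_pos hW0 hD'
  have heq : (1 / (D:ℝ)) * (∑ n, ∑ m, if |E n - E m| < ΔE then Complex.normSq (dev n m) else 0)
      = (1 / (W * D)) * (W * (∑ n, ∑ m, if |E n - E m| < ΔE then Complex.normSq (dev n m) else 0)) := by
    field_simp
  rw [heq, show (c / (W * D)) * εA = (1 / (W * D)) * (c * εA) by ring]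
  exact (mul_lt_mul_iff_right₀ (by positivity)).2 hWB



end QET
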